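/- Let G be a finite group and k an infinite field (more generally, a field containing sufficiently many elements). Then there exists a finite-dimensional algebra A over k such that: (a) A_F is simple for every field extension F/k (in particular A is simple), and (b) for every field extension F/k, the full automorphism group Aut(A_F) is isomorphic to G. -/

import Mathlib

open scoped TensorProduct

/-- An `F`-linear automorphism `σ` of a nonassociative algebra given by a bilinear
multiplication `m` is multiplicative. -/
def IsMulAut {F A : Type*} [Field F] [AddCommGroup A] [Module F A]
    (m : A →ₗ[F] A →ₗ[F] A) (σ : A ≃ₗ[F] A) : Prop :=
  ∀ x y : A, σ (m x y) = m (σ x) (σ y)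

/-- The full automorphism group of the nonassociative algebra `(A, m)`, as a subgroup of
the group of linear automorphisms of `A`. -/
def autGroup {F A : Type*} [Field F] [AddCommGroup A] [Module F A]
    (m : A →ₗ[F] A →ₗ[F] A) : Subgroup (A ≃ₗ[F] A) where
  carrier := {σ | IsMulAut m σ}
  one_mem' := fun _ _ => rfl
  mul_mem' := by
    intro σ τ hσ hτ x y
    have : (σ * τ) = τ.trans σ := rfl
    simp only [this, LinearEquiv.trans_apply, hτ x y, hσ (τ x) (τ y)]
  inv_mem' := by
    intro σ hσ x y
    have h : (σ⁻¹ : A ≃ₗ[F] A) = σ.symm := rfl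
    rw [h]
    apply σ.injective
    rw [σ.apply_symm_apply, hσ (σ.symm x) (σ.symm y), σ.apply_symm_apply,
      σ.apply_symm_apply]

/-- A nonassociative algebra (given by the bilinear multiplication `m`) is simple: its
multiplication is nonzero and it has no two-sided ideals other than `0` and itself. -/
def IsSimpleMul {F A : Type*} [Field F] [AddCommGroup A] [Module F A]
    (m : A →ₗ[F] A →ₗ[F] A) : Prop :=
  m ≠ 0 ∧ ∀ I : Submodule F A, (∀ x ∈ I, ∀ y : A, m x y ∈ I ∧ m y x ∈ I) →
    I = ⊥ ∨ I = ⊤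

set_option linter.unusedSectionVars false
set_option maxHeartbeats 1600000
set_option synthInstance.maxHeartbeats 400000

section Core
variable {F : Type*} [Field F] {ι : Type*} [Fintype ι] [DecidableEq ι]

private lemma sum_lam_add (lam : ι → ι → F) (i : ι) (f g : ι → F) :
    (∑ j, lam i j * (f j + g j)) = (∑ j, lam i j * f j) + (∑ j, lam i j * g j) := by
  rw [← Finset.sum_add_distrib]
  exact Finset.sum_congr rfl fun j _ => by ring

private lemma sum_lam_smul (lam : ι → ι → F) (i : ι) (c : F) (f : ι → F) :
    (∑ j, lam i j * (c * f j)) = c * ∑ j, lam i j * f j := by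
  rw [Finset.mul_sum]
  exact Finset.sum_congr rfl fun j _ => by ring

/-- The multiplication `m(f,g) = f⋆g + f⋆(Λg) − g⋆(Λf)`. -/
noncomputable def lamMul (lam : ι → ι → F) : (ι → F) →ₗ[F] (ι → F) →ₗ[F] (ι → F) :=
  LinearMap.mk₂ F
    (fun f g => fun i => f i * g i + f i * (∑ j, lam i j * g j) - g i * (∑ j, lam i j * f j))
    (by intro f f' g; funext i
        simp only [Pi.add_apply, sum_lam_add]; ring)
    (by intro c f g; funext i
        simp only [Pi.add_apply, Pi.smul_apply, smul_eq_mul, sum_lam_smul]; ring)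
    (by intro f g g'; funext i
        simp only [Pi.add_apply, sum_lam_add]; ring)
    (by intro c f g; funext i
        simp only [Pi.add_apply, Pi.smul_apply, smul_eq_mul, sum_lam_smul]; ring)

lemma lamMul_apply (lam : ι → ι → F) (f g : ι → F) (i : ι) :
    lamMul lam f g i
      = f i * g i + f i * (∑ j, lam i j * g j) - g i * (∑ j, lam i j * f j) := rfl

private lemma sum_lam_single (lam : ι → ι → F) (i t : ι) (b : F) :
    (∑ j, lam i j * (Pi.single t b : ι → F) j) = lam i t * b := by
  rw [Finset.sum_eq_single t]
  · simp
  · intro j _ hj; simp [Pi.single_eq_of_ne hj]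
  · simp

lemma lamMul_single_same (lam : ι → ι → F) {s : ι} (h : lam s s = 0) (a b : F) :
    lamMul lam (Pi.single s a) (Pi.single s b) = Pi.single s (a * b) := by
  funext i
  rw [lamMul_apply, sum_lam_single, sum_lam_single]
  rcases eq_or_ne i s with rfl | hne
  · simp [h]
  · simp [Pi.single_eq_of_ne hne]

lemma lamMul_single_ne (lam : ι → ι → F) {s t : ι} (h : s ≠ t) (a b : F) :
    lamMul lam (Pi.single s a) (Pi.single t b)
      = Pi.single s (a * b * lam s t) - Pi.single t (a * b * lam t s) := by
  funext i
  rw [lamMul_apply, sum_lam_single, sum_lam_single]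
  rcases eq_or_ne i s with rfl | hs
  · simp [Pi.single_eq_of_ne (Ne.symm h), Pi.single_eq_of_ne h]
    ring
  · rcases eq_or_ne i t with rfl | ht
    · simp [Pi.single_eq_of_ne hs, Pi.single_eq_of_ne (Ne.symm hs), Pi.single_eq_of_ne h,
        Pi.single_eq_of_ne (Ne.symm h)]
      ring
    · simp [Pi.single_eq_of_ne hs, Pi.single_eq_of_ne ht]

lemma lamMul_single_left_apply (lam : ι → ι → F) (t : ι) (x : ι → F) (i : ι) :
    lamMul lam (Pi.single t (1:F)) x i
      = (if i = t then x i + ∑ j, lam i j * x j else 0) - x i * lam i t := by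
  rw [lamMul_apply, sum_lam_single]
  rcases eq_or_ne i t with rfl | hne
  · simp [Pi.single_eq_same]
  · simp [Pi.single_eq_of_ne hne, hne]

lemma single_eq_smul_single (t : ι) (c : F) :
    (Pi.single t c : ι → F) = c • (Pi.single t (1:F) : ι → F) := by
  funext j
  rcases eq_or_ne j t with rfl | h
  · simp
  · simp [Pi.single_eq_of_ne h]

theorem lamMul_isSimple [Nonempty ι] (lam : ι → ι → F)
    (h0 : ∀ i, lam i i = 0)
    (h1 : ∀ i j, i ≠ j → lam i j ≠ 0)
    (h2 : ∀ i i' j, lam i j = lam i' j → i = i')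
    (h3 : ∀ i j, i ≠ j → 1 + lam i j + lam j i ≠ 0) :
    IsSimpleMul (lamMul lam) := by
  classical
  constructor
  · intro hz
    obtain ⟨i0⟩ := ‹Nonempty ι›
    have h := lamMul_single_same lam (h0 i0) (1:F) 1
    rw [hz] at h
    have := congrFun h i0
    simp at this
  · intro I hI
    by_cases hbot : I = ⊥
    · left; exact hbot
    right
    obtain ⟨x, hxI, hx0⟩ := (Submodule.ne_bot_iff I).1 hbot
    set spt : (ι → F) → Finset ι := fun y => Finset.univ.filter (fun i => y i ≠ 0) with hspt
    have spt_mem : ∀ (y : ι → F) (i : ι), i ∈ spt y ↔ y i ≠ 0 := by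
      intro y i; simp [hspt]
    have key0 : {c : ℕ | ∃ y, y ∈ I ∧ y ≠ 0 ∧ (spt y).card = c}.Nonempty :=
      ⟨_, x, hxI, hx0, rfl⟩
    obtain ⟨z, hzI, hz0, hzc⟩ := Nat.sInf_mem key0
    have hmin : ∀ y, y ∈ I → y ≠ 0 → (spt z).card ≤ (spt y).card := by
      intro y hy hy0
      rw [hzc]; exact Nat.sInf_le ⟨y, hy, hy0, rfl⟩
    suffices hsingle : ∃ t, (Pi.single t (1:F) : ι → F) ∈ I by
      obtain ⟨t, htI⟩ := hsingle
      have hall : ∀ h : ι, (Pi.single h (1:F) : ι → F) ∈ I := by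
        intro h
        rcases eq_or_ne h t with rfl | hht
        · exact htI
        have hw : lamMul lam (Pi.single t 1) (Pi.single h 1) ∈ I := (hI _ htI _).1
        rw [lamMul_single_ne lam (Ne.symm hht)] at hw
        have hA : (Pi.single t (1*1*lam t h) : ι → F) ∈ I := by
          rw [single_eq_smul_single]; exact I.smul_mem _ htI
        have hB : (Pi.single h (1*1*lam h t) : ι → F) ∈ I := by
          have : (Pi.single h (1*1*lam h t) : ι → F)
              = Pi.single t (1*1*lam t h) -
                (Pi.single t (1*1*lam t h) - Pi.single h (1*1*lam h t)) := by abel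
          rw [this]; exact I.sub_mem hA hw
        have hne : (1*1*lam h t : F) ≠ 0 := by
          simpa using h1 h t hht
        have : (Pi.single h (1:F) : ι → F) = (1*1*lam h t)⁻¹ • (Pi.single h (1*1*lam h t) : ι → F) := by
          rw [single_eq_smul_single h ((1*1*lam h t : F))]
          rw [smul_smul, inv_mul_cancel₀ hne, one_smul]
        rw [this]
        exact I.smul_mem _ hB
      rw [Submodule.eq_top_iff']
      intro f
      have hf : f = ∑ i, (f i) • (Pi.single i (1:F) : ι → F) := by
        conv_lhs => rw [← Finset.univ_sum_single f]
        exact Finset.sum_congr rfl fun i _ => single_eq_smul_single i (f i)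
      rw [hf]
      exact Submodule.sum_mem _ fun i _ => I.smul_mem _ (hall i)
    -- now produce a single
    rcases le_or_gt (spt z).card 1 with hle | hlt
    · -- z is supported at one point
      obtain ⟨i, hi⟩ : ∃ i, z i ≠ 0 := by
        by_contra hc; push_neg at hc; exact hz0 (funext hc)
      have hi' : i ∈ spt z := (spt_mem z i).2 hi
      have hcard : (spt z).card = 1 := le_antisymm hle (Finset.card_pos.2 ⟨i, hi'⟩)
      obtain ⟨a, ha⟩ := Finset.card_eq_one.1 hcard
      have hza : z a ≠ 0 := by
        have : a ∈ spt z := by rw [ha]; exact Finset.mem_singleton_self a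
        exact (spt_mem z a).1 this
      refine ⟨a, ?_⟩
      have hrep : (Pi.single a (1:F) : ι → F) = (z a)⁻¹ • z := by
        funext j
        rcases eq_or_ne j a with rfl | hja
        · simp [inv_mul_cancel₀ hza]
        · have hzj : z j = 0 := by
            have hj : j ∉ spt z := by rw [ha]; simp [hja]
            rw [spt_mem] at hj
            exact not_ne_iff.1 hj
          simp [Pi.single_eq_of_ne hja, hzj]
      rw [hrep]
      exact I.smul_mem _ hzI
    · exfalso
      obtain ⟨t, ht, u, hu, htu⟩ := Finset.one_lt_card.1 hlt
      have hzt : z t ≠ 0 := (spt_mem z t).1 ht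
      have hzu : z u ≠ 0 := (spt_mem z u).1 hu
      have key : ∀ t, t ∈ spt z → ∀ s, s ∈ spt z → s ≠ t →
          z t + (∑ j, lam t j * z j) = -(z t * lam s t) := by
        intro t ht s hs hst
        have hzt : z t ≠ 0 := (spt_mem z t).1 ht
        have hzs : z s ≠ 0 := (spt_mem z s).1 hs
        set v : ι → F := lamMul lam (Pi.single t 1) z with hv
        have hvI : v ∈ I := (hI z hzI _).2
        have hvc : ∀ i, v i = (if i = t then z i + ∑ j, lam i j * z j else 0) - z i * lam i t :=
          fun i => lamMul_single_left_apply lam t z i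
        have hsub : spt v ⊆ spt z := by
          intro i hi
          rw [spt_mem] at hi ⊢
          by_contra hzi
          apply hi
          have hit : i ≠ t := by rintro rfl; exact hzt hzi
          rw [hvc i, if_neg hit, hzi]; ring
        have hvne : v ≠ 0 := by
          intro hv0
          have hcs := congrFun hv0 s
          rw [hvc s, if_neg hst] at hcs
          simp only [Pi.zero_apply, zero_sub, neg_eq_zero] at hcs
          exact (mul_ne_zero hzs (h1 s t hst)) hcs
        have hveq : spt v = spt z :=
          Finset.eq_of_subset_of_card_le hsub (hmin v hvI hvne)
        set w : ι → F := z t • v - v t • z with hw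
        have hwI : w ∈ I := I.sub_mem (I.smul_mem _ hvI) (I.smul_mem _ hzI)
        have hwt : w t = 0 := by
          simp only [hw, Pi.sub_apply, Pi.smul_apply, smul_eq_mul]; ring
        have hw0 : w = 0 := by
          by_contra hwne
          have h1' : spt w ⊆ spt z := by
            intro i hi; rw [spt_mem] at hi ⊢
            intro hzi
            apply hi
            have hvi : v i = 0 := by
              have hns : i ∉ spt v := by
                rw [hveq, spt_mem]
                exact fun hne' => hne' hzi
              rw [spt_mem] at hns
              exact not_ne_iff.1 hns
            simp only [hw, Pi.sub_apply, Pi.smul_apply, smul_eq_mul, hvi, hzi]; ring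
          have hweq : spt w = spt z :=
            Finset.eq_of_subset_of_card_le h1' (hmin w hwI hwne)
          have : t ∈ spt w := by rw [hweq]; exact ht
          rw [spt_mem] at this
          exact this hwt
        have hws := congrFun hw0 s
        simp only [hw, Pi.sub_apply, Pi.smul_apply, smul_eq_mul, Pi.zero_apply] at hws
        rw [hvc s, if_neg hst, hvc t, if_pos rfl, h0 t] at hws
        have hfac : z s * (z t * lam s t + (z t + ∑ j, lam t j * z j)) = 0 := by
          linear_combination -hws
        rcases mul_eq_zero.1 hfac with h | h
        · exact absurd h hzs
        · linear_combination h
      by_cases hthree : ∃ s', s' ∈ spt z ∧ s' ≠ t ∧ s' ≠ u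
      · obtain ⟨s', hs', hs't, hs'u⟩ := hthree
        have e1 := key t ht u hu (Ne.symm htu)
        have e2 := key t ht s' hs' hs't
        have hcc : z t * lam u t = z t * lam s' t := by linear_combination e1 - e2
        have : lam u t = lam s' t := mul_left_cancel₀ hzt hcc
        exact hs'u (h2 s' u t this.symm)
      · push_neg at hthree
        have hzj : ∀ j, j ≠ t → j ≠ u → z j = 0 := by
          intro j hjt hju
          by_contra hc
          exact hju (hthree j ((spt_mem z j).2 hc) hjt)
        have hsum_t : (∑ j, lam t j * z j) = lam t u * z u := by
          rw [Finset.sum_eq_single u]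
          · intro j _ hju
            rcases eq_or_ne j t with rfl | hjt
            · rw [h0]; ring
            · rw [hzj j hjt hju]; ring
          · simp
        have hsum_u : (∑ j, lam u j * z j) = lam u t * z t := by
          rw [Finset.sum_eq_single t]
          · intro j _ hjt
            rcases eq_or_ne j u with rfl | hju
            · rw [h0]; ring
            · rw [hzj j hjt hju]; ring
          · simp
        have e1 := key t ht u hu (Ne.symm htu)
        have e2 := key u hu t ht htu
        rw [hsum_t] at e1
        rw [hsum_u] at e2
        have hpq : z t = z u := by linear_combination e1 - e2
        have hfin : z t * (1 + lam t u + lam u t) = 0 := by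
          linear_combination e1 + lam t u * hpq
        rcases mul_eq_zero.1 hfin with h | h
        · exact hzt h
        · exact h3 t u htu h

/-- Coordinate-permutation linear automorphism. -/
def permMap (π : Equiv.Perm ι) : (ι → F) ≃ₗ[F] (ι → F) where
  toFun := fun f i => f (π.symm i)
  invFun := fun f i => f (π i)
  map_add' := fun f g => rfl
  map_smul' := fun c f => rfl
  left_inv := fun f => by funext i; simp
  right_inv := fun f => by funext i; simp

lemma permMap_apply (π : Equiv.Perm ι) (f : ι → F) (i : ι) :
    permMap π f i = f (π.symm i) := rfl

lemma permMap_single (π : Equiv.Perm ι) (t : ι) :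
    permMap π (Pi.single t (1:F)) = Pi.single (π t) 1 := by
  funext i
  rw [permMap_apply]
  simp [Pi.single_apply, Equiv.symm_apply_eq]

lemma permMap_isMulAut (lam : ι → ι → F) (π : Equiv.Perm ι)
    (hπ : ∀ s t, lam (π s) (π t) = lam s t) :
    IsMulAut (lamMul lam) (permMap π) := by
  intro f g
  funext i
  have hsum : ∀ h : ι → F, (∑ j, lam i j * h (π.symm j)) = ∑ j, lam (π.symm i) j * h j := by
    intro h
    refine Fintype.sum_equiv π.symm _ _ fun x => ?_
    have hx := hπ (π.symm i) (π.symm x)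
    rw [Equiv.apply_symm_apply, Equiv.apply_symm_apply] at hx
    rw [hx]
  have : permMap π (lamMul lam f g) i = lamMul lam f g (π.symm i) := rfl
  rw [this, lamMul_apply, lamMul_apply]
  simp only [permMap_apply]
  rw [hsum f, hsum g]

/-- Permutations preserving the structure constants. -/
def lamPerms (lam : ι → ι → F) : Subgroup (Equiv.Perm ι) where
  carrier := {π | ∀ s t, lam (π s) (π t) = lam s t}
  one_mem' := by intro s t; rfl
  mul_mem' := by
    intro π τ hπ hτ s t
    have : ∀ x, (π * τ) x = π (τ x) := fun x => rfl
    rw [this, this, hπ, hτ]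
  inv_mem' := by
    intro π hπ s t
    have := hπ (π⁻¹ s) (π⁻¹ t)
    simp only [Equiv.Perm.coe_inv, Equiv.apply_symm_apply] at this
    exact this.symm

/-- The homomorphism from invariant permutations to algebra automorphisms. -/
noncomputable def permToAut (lam : ι → ι → F) : lamPerms lam →* autGroup (lamMul lam) where
  toFun := fun π => ⟨permMap π.1, permMap_isMulAut lam π.1 π.2⟩
  map_one' := by
    apply Subtype.ext
    apply LinearEquiv.ext
    intro f; funext i; rfl
  map_mul' := by
    intro π τ
    apply Subtype.ext
    apply LinearEquiv.ext
    intro f; funext i; rfl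

theorem aut_is_perm [Nonempty ι] (lam : ι → ι → F)
    (h0 : ∀ i, lam i i = 0)
    (hA : ∀ (i : ι) (B : Finset ι) (s t : ι), s ≠ t → i ∉ B →
      (∑ j ∈ B, lam i j) = lam s t → ∃ j0, B = {j0})
    (hC : ∀ (i : ι) (A B : Finset ι) (s t : ι), s ≠ t →
      (1 + (∑ j ∈ B, lam i j) - (∑ j ∈ A, lam i j)) ≠ lam s t - lam t s)
    (σ : (ι → F) ≃ₗ[F] (ι → F)) (hσ : IsMulAut (lamMul lam) σ) :
    ∃ π : Equiv.Perm ι, (∀ s t, lam (π s) (π t) = lam s t) ∧ σ = permMap π := by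
  classical
  set y : ι → ι → F := fun s => σ (Pi.single s 1) with hy
  have ydef : ∀ s, σ (Pi.single s (1:F)) = y s := fun s => rfl
  have idem : ∀ s i, y s i = 0 ∨ y s i = 1 := by
    intro s i
    have h := hσ (Pi.single s 1) (Pi.single s 1)
    rw [lamMul_single_same lam (h0 s), one_mul] at h
    have hc := congrFun h i
    rw [lamMul_apply] at hc
    rw [ydef s] at hc
    have hq : y s i * (y s i - 1) = 0 := by linear_combination -hc
    rcases mul_eq_zero.1 hq with h' | h'
    · exact Or.inl h'
    · exact Or.inr (by linear_combination h')
  set T : ι → Finset ι := fun s => Finset.univ.filter (fun i => y s i = 1) with hT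
  have memT : ∀ s i, i ∈ T s ↔ y s i = 1 := by intro s i; simp [hT]
  have indicator : ∀ s i, y s i = if i ∈ T s then 1 else 0 := by
    intro s i
    by_cases h : i ∈ T s
    · rw [if_pos h]; exact (memT s i).1 h
    · rw [if_neg h]
      rcases idem s i with h' | h'
      · exact h'
      · exact absurd ((memT s i).2 h') h
  have Tne : ∀ s, (T s).Nonempty := by
    intro s
    have hy0 : y s ≠ 0 := by
      intro hz
      have : (Pi.single s 1 : ι → F) = 0 := by
        apply σ.injective; rw [map_zero]; exact hz
      have := congrFun this s
      simp at this
    obtain ⟨i, hi⟩ : ∃ i, y s i ≠ 0 := by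
      by_contra hc; push_neg at hc; exact hy0 (funext hc)
    refine ⟨i, (memT s i).2 ?_⟩
    rcases idem s i with h' | h'
    · exact absurd h' hi
    · exact h'
  have sumy : ∀ s i, (∑ j, lam i j * y s j) = ∑ j ∈ T s, lam i j := by
    intro s i
    rw [Finset.sum_filter]
    refine Finset.sum_congr rfl fun j _ => ?_
    rcases idem s j with h' | h'
    · rw [h']; simp [h']
    · rw [h']; simp [h']
  have eq1 : ∀ s t, s ≠ t → ∀ i,
      lam s t * y s i - lam t s * y t i
        = y s i * y t i + y s i * (∑ j ∈ T t, lam i j) - y t i * (∑ j ∈ T s, lam i j) := by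
    intro s t hst i
    have h := hσ (Pi.single s 1) (Pi.single t 1)
    rw [lamMul_single_ne lam hst, map_sub, single_eq_smul_single s, single_eq_smul_single t,
      map_smul, map_smul] at h
    have hc := congrFun h i
    simp only [Pi.sub_apply, Pi.smul_apply, smul_eq_mul, one_mul] at hc
    rw [lamMul_apply] at hc
    rw [ydef s, ydef t] at hc
    rw [sumy t, sumy s] at hc
    exact hc
  have disj : ∀ s t, s ≠ t → ∀ i, i ∈ T s → i ∈ T t → False := by
    intro s t hst i his hit
    have he := eq1 s t hst i
    rw [(memT s i).1 his, (memT t i).1 hit] at he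
    exact hC i (T s) (T t) s t hst (by linear_combination -he)
  have ysingle : ∀ t, ∃ j0, T t = {j0} := by
    intro t
    by_cases hex : ∃ s, s ≠ t
    · obtain ⟨s, hs⟩ := hex
      obtain ⟨i, hiTs⟩ := Tne s
      have hiTt : i ∉ T t := fun h => disj s t hs i hiTs h
      have he := eq1 s t hs i
      have h1s : y s i = 1 := (memT s i).1 hiTs
      have h0t : y t i = 0 := by
        rcases idem t i with h' | h'
        · exact h'
        · exact absurd ((memT t i).2 h') hiTt
      rw [h1s, h0t] at he
      exact hA i (T t) s t hs hiTt (by linear_combination -he)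
    · push_neg at hex
      refine ⟨t, ?_⟩
      ext j
      simp only [Finset.mem_singleton]
      constructor
      · intro _; exact hex j
      · intro hj
        obtain ⟨i, hi⟩ := Tne t
        have hit : i = t := hex i
        have hi' := (memT t i).1 hi
        rw [hit] at hi'
        refine (memT t j).2 ?_
        rw [hj]
        exact hi'
  choose π0 hπ0 using ysingle
  have inj : Function.Injective π0 := by
    intro s t hst
    by_contra hne
    refine disj s t hne (π0 s) ?_ ?_
    · rw [hπ0 s]; exact Finset.mem_singleton_self _
    · rw [hπ0 t, hst]; exact Finset.mem_singleton_self _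
  have bij : Function.Bijective π0 := Finite.injective_iff_bijective.1 inj
  set π : Equiv.Perm ι := Equiv.ofBijective π0 bij with hπdef
  have hπap : ∀ t, π t = π0 t := fun t => rfl
  have ysing : ∀ t, y t = Pi.single (π0 t) 1 := by
    intro t
    funext i
    rw [indicator, hπ0, Pi.single_apply]
    simp
  have hinv : ∀ s t, lam (π s) (π t) = lam s t := by
    intro s t
    rcases eq_or_ne s t with rfl | hst
    · rw [h0, h0]
    · have hiTs : π0 s ∈ T s := by rw [hπ0 s]; exact Finset.mem_singleton_self _
      have hiTt : π0 s ∉ T t := fun h => disj s t hst (π0 s) hiTs h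
      have he := eq1 s t hst (π0 s)
      have h1s : y s (π0 s) = 1 := (memT s _).1 hiTs
      have h0t : y t (π0 s) = 0 := by
        rcases idem t (π0 s) with h' | h'
        · exact h'
        · exact absurd ((memT t _).2 h') hiTt
      rw [h1s, h0t, hπ0 t, Finset.sum_singleton] at he
      rw [hπap, hπap]
      linear_combination -he
  refine ⟨π, hinv, ?_⟩
  apply LinearEquiv.ext
  intro f
  have hfs : σ f = ∑ i, f i • (Pi.single (π0 i) (1:F) : ι → F) := by
    conv_lhs => rw [← Finset.univ_sum_single f]
    rw [map_sum]
    refine Finset.sum_congr rfl fun i _ => ?_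
    rw [single_eq_smul_single, map_smul]
    exact congrArg (fun v => f i • v) (ysing i)
  rw [hfs]
  funext i'
  rw [permMap_apply]
  simp only [Finset.sum_apply, Pi.smul_apply, smul_eq_mul]
  rw [Finset.sum_eq_single (π.symm i')]
  · have hps : π0 (π.symm i') = i' := π.apply_symm_apply i'
    rw [hps, Pi.single_eq_same, mul_one]
  · intro j _ hj
    have hne : i' ≠ π0 j := by
      intro he
      apply hj
      have : π j = i' := by rw [hπap, ← he]
      rw [← this, Equiv.symm_apply_apply]
    rw [Pi.single_eq_of_ne hne, mul_zero]
  · intro h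
    exact absurd (Finset.mem_univ _) h

theorem autGroup_equiv_lamPerms [Nonempty ι] (lam : ι → ι → F)
    (h0 : ∀ i, lam i i = 0)
    (hA : ∀ (i : ι) (B : Finset ι) (s t : ι), s ≠ t → i ∉ B →
      (∑ j ∈ B, lam i j) = lam s t → ∃ j0, B = {j0})
    (hC : ∀ (i : ι) (A B : Finset ι) (s t : ι), s ≠ t →
      (1 + (∑ j ∈ B, lam i j) - (∑ j ∈ A, lam i j)) ≠ lam s t - lam t s) :
    Nonempty ((autGroup (lamMul lam)) ≃* lamPerms lam) := by
  have hbij : Function.Bijective (permToAut lam) := by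
    constructor
    · intro a b hab
      apply Subtype.ext
      apply Equiv.ext
      intro t
      have h := congrArg Subtype.val hab
      have h2 : permMap (a.1) (Pi.single t (1:F)) = permMap (b.1) (Pi.single t (1:F)) :=
        congrArg (fun e : (ι → F) ≃ₗ[F] (ι → F) => e (Pi.single t 1)) h
      rw [permMap_single, permMap_single] at h2
      have := congrFun h2 (a.1 t)
      rw [Pi.single_eq_same, Pi.single_apply] at this
      by_contra hne
      rw [if_neg ?_] at this
      · exact one_ne_zero this
      · intro he
        exact hne (by rw [← he])
    · rintro ⟨σ, hσ⟩
      obtain ⟨π, hinv, heq⟩ := aut_is_perm lam h0 hA hC σ hσ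
      exact ⟨⟨π, hinv⟩, Subtype.ext heq.symm⟩
  exact ⟨(MulEquiv.ofBijective (permToAut lam) hbij).symm⟩

end Core

/-- The independence condition on the structure-constant values. -/
def INDmu {F ι : Type*} [Field F] [Fintype ι] [One ι] (μ : ι → F) : Prop :=
  ∀ (c₀ : ℤ) (c : ι → ℤ), |c₀| ≤ 2 → (∀ w, |c w| ≤ 2) →
    ((c₀ : F) + ∑ w, (c w : F) * μ w = 0) → (c₀ : F) = 0 ∧ ∀ w, w ≠ 1 → (c w : F) = 0

/-- Structure constants from a group and a scalar function. -/
def glam {F ι : Type*} [Field F] [Group ι] (μ : ι → F) : ι → ι → F := fun s t => μ (s⁻¹ * t)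

section GroupModel
variable {F : Type*} [Field F] {ι : Type*} [Fintype ι] [DecidableEq ι] [Group ι]
variable (μ : ι → F)

private lemma sum_ind (v : ι) (f : ι → F) :
    (∑ w, (((if w = v then 1 else 0 : ℤ)) : F) * f w) = f v := by
  rw [Finset.sum_eq_single v]
  · simp
  · intro b _ hb; simp [hb]
  · simp

private lemma sum_shift (i : ι) (B : Finset ι) :
    (∑ w, (if i * w ∈ B then μ w else 0)) = ∑ j ∈ B, μ (i⁻¹ * j) := by
  have h2 : (∑ j, if j ∈ B then μ (i⁻¹ * j) else 0) = ∑ j ∈ B, μ (i⁻¹ * j) := by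
    rw [Finset.sum_ite_mem, Finset.univ_inter]
  rw [← h2]
  refine Fintype.sum_equiv (Equiv.mulLeft i) _ _ fun x => ?_
  simp [inv_mul_cancel_left]

variable (hone : μ 1 = 0) (hIND : INDmu μ)
include hone hIND

theorem mu_ne (v : ι) (hv : v ≠ 1) : μ v ≠ 0 := by
  intro hz
  have h := hIND 0 (fun w => if w = v then 1 else 0) (by norm_num)
    (fun w => by split_ifs <;> norm_num) ?_
  · have h2 := h.2 v hv
    simp at h2
  · rw [sum_ind v μ, hz]
    norm_num

theorem mu_inj : Function.Injective μ := by
  intro a b hab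
  by_contra hne
  have h := hIND 0 (fun w => (if w = a then 1 else 0) - (if w = b then 1 else 0))
    (by norm_num) (fun w => by split_ifs <;> norm_num) ?_
  · rcases eq_or_ne a 1 with rfl | ha
    · have hb : b ≠ 1 := fun hb => hne hb.symm
      have h2 := h.2 b hb
      simp [hb] at h2
    · have h2 := h.2 a ha
      simp [hne] at h2
  · have hs : (∑ w, ((((if w = a then 1 else 0) - (if w = b then 1 else 0) : ℤ)) : F) * μ w)
        = μ a - μ b := by
      have hpt : ∀ w, ((((if w = a then 1 else 0) - (if w = b then 1 else 0) : ℤ)) : F) * μ w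
          = (((if w = a then 1 else 0 : ℤ)) : F) * μ w
            - (((if w = b then 1 else 0 : ℤ)) : F) * μ w := by
        intro w; push_cast; ring
      rw [Finset.sum_congr rfl fun w _ => hpt w, Finset.sum_sub_distrib,
        sum_ind a μ, sum_ind b μ]
    rw [hs, hab]
    norm_num

theorem glam_h0 : ∀ i : ι, glam μ i i = 0 := by
  intro i; simp [glam, hone]

theorem glam_h1 : ∀ i j : ι, i ≠ j → glam μ i j ≠ 0 := by
  intro i j hij
  refine mu_ne μ hone hIND _ fun h => hij ?_
  rwa [inv_mul_eq_one] at h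

theorem glam_h2 : ∀ i i' j : ι, glam μ i j = glam μ i' j → i = i' := by
  intro i i' j h
  have h1 := mu_inj μ hone hIND h
  have h2 := mul_right_cancel h1
  exact inv_injective h2

theorem glam_h3 : ∀ i j : ι, i ≠ j → 1 + glam μ i j + glam μ j i ≠ 0 := by
  intro i j hij heq
  set a := i⁻¹ * j with ha
  have haa : j⁻¹ * i = a⁻¹ := by rw [ha]; simp [mul_inv_rev]
  have h := hIND 1 (fun w => (if w = a then 1 else 0) + (if w = a⁻¹ then 1 else 0))
    (by norm_num) (fun w => by split_ifs <;> norm_num) ?_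
  · exact one_ne_zero (by exact_mod_cast h.1)
  · have hs : (∑ w, ((((if w = a then 1 else 0) + (if w = a⁻¹ then 1 else 0) : ℤ)) : F) * μ w)
        = μ a + μ a⁻¹ := by
      have hpt : ∀ w, ((((if w = a then 1 else 0) + (if w = a⁻¹ then 1 else 0) : ℤ)) : F) * μ w
          = (((if w = a then 1 else 0 : ℤ)) : F) * μ w
            + (((if w = a⁻¹ then 1 else 0 : ℤ)) : F) * μ w := by
        intro w; push_cast; ring
      rw [Finset.sum_congr rfl fun w _ => hpt w, Finset.sum_add_distrib,
        sum_ind a μ, sum_ind a⁻¹ μ]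
    rw [hs]
    have e1 : glam μ i j = μ a := rfl
    have e2 : glam μ j i = μ a⁻¹ := by
      show μ (j⁻¹ * i) = μ a⁻¹
      rw [haa]
    push_cast
    linear_combination heq - e1 - e2

theorem glam_hA : ∀ (i : ι) (B : Finset ι) (s t : ι), s ≠ t → i ∉ B →
    (∑ j ∈ B, glam μ i j) = glam μ s t → ∃ j0, B = {j0} := by
  intro i B s t hst hiB hsum
  set v := s⁻¹ * t with hv
  have hv1 : v ≠ 1 := fun h => hst (by rwa [inv_mul_eq_one] at h)
  have hsum' : (∑ j ∈ B, μ (i⁻¹ * j)) = μ v := hsum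
  have h := hIND 0 (fun w => (if i * w ∈ B then 1 else 0) - (if w = v then 1 else 0))
    (by norm_num) (fun w => by split_ifs <;> norm_num) ?_
  swap
  · have hpt : ∀ w, ((((if i * w ∈ B then 1 else 0) - (if w = v then 1 else 0) : ℤ)) : F) * μ w
        = (if i * w ∈ B then μ w else 0) - (((if w = v then 1 else 0 : ℤ)) : F) * μ w := by
      intro w; push_cast; split_ifs <;> ring
    rw [Finset.sum_congr rfl fun w _ => hpt w, Finset.sum_sub_distrib, sum_shift μ i B,
      sum_ind v μ]
    push_cast
    linear_combination hsum'
  · have hiff : ∀ w : ι, (i * w ∈ B ↔ w = v) := by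
      intro w
      rcases eq_or_ne w 1 with rfl | hw
      · constructor
        · intro hmem; rw [mul_one] at hmem; exact absurd hmem hiB
        · intro hh; exact absurd hh.symm hv1
      · have hc := h.2 w hw
        by_cases hm : i * w ∈ B <;> by_cases hm2 : w = v
        · exact iff_of_true hm hm2
        · simp [hm, hm2] at hc
        · exfalso; subst hm2; simp [hm] at hc
        · exact iff_of_false hm hm2
    refine ⟨i * v, ?_⟩
    ext j
    rw [Finset.mem_singleton]
    constructor
    · intro hj
      have hj2 := (hiff (i⁻¹ * j)).1 (by rwa [mul_inv_cancel_left])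
      rw [← hj2, mul_inv_cancel_left]
    · intro hj
      have hj2 := (hiff v).2 rfl
      rwa [hj]

theorem glam_hC : ∀ (i : ι) (A B : Finset ι) (s t : ι), s ≠ t →
    (1 + (∑ j ∈ B, glam μ i j) - (∑ j ∈ A, glam μ i j)) ≠ glam μ s t - glam μ t s := by
  intro i A B s t hst heq
  set v := s⁻¹ * t with hv
  set v' := t⁻¹ * s with hv'
  have heq' : 1 + (∑ j ∈ B, μ (i⁻¹ * j)) - (∑ j ∈ A, μ (i⁻¹ * j)) = μ v - μ v' := heq
  have h := hIND 1 (fun w => (if i * w ∈ B then 1 else 0) - (if i * w ∈ A then 1 else 0)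
      - (if w = v then 1 else 0) + (if w = v' then 1 else 0))
    (by norm_num) (fun w => by split_ifs <;> norm_num) ?_
  · exact one_ne_zero (by exact_mod_cast h.1)
  · have hpt : ∀ w, ((((if i * w ∈ B then 1 else 0) - (if i * w ∈ A then 1 else 0)
          - (if w = v then 1 else 0) + (if w = v' then 1 else 0) : ℤ)) : F) * μ w
        = ((if i * w ∈ B then μ w else 0) - (if i * w ∈ A then μ w else 0)
            - (((if w = v then 1 else 0 : ℤ)) : F) * μ w)
          + (((if w = v' then 1 else 0 : ℤ)) : F) * μ w := by
      intro w; push_cast; split_ifs <;> ring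
    rw [Finset.sum_congr rfl fun w _ => hpt w, Finset.sum_add_distrib,
      Finset.sum_sub_distrib, Finset.sum_sub_distrib, sum_shift μ i B, sum_shift μ i A,
      sum_ind v μ, sum_ind v' μ]
    push_cast
    linear_combination heq'
end GroupModel

section Exists
variable (k : Type*) [Field k] [Infinite k] (ι : Type*) [Fintype ι] [DecidableEq ι] [One ι]

theorem exists_mu : ∃ μ : ι → k, μ 1 = 0 ∧ INDmu μ := by
  classical
  set enc : ι → ℕ := fun w => (Fintype.equivFin ι w : ℕ) + 1 with henc
  have encinj : Function.Injective enc := by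
    intro a b h
    have h2 : (Fintype.equivFin ι a : ℕ) = Fintype.equivFin ι b := by
      simpa [henc] using h
    exact (Fintype.equivFin ι).injective (Fin.ext h2)
  have enc1 : ∀ w, 1 ≤ enc w := fun w => Nat.le_add_left 1 _
  set P : ℤ × (ι → ℤ) → Polynomial k :=
    fun p => Polynomial.C ((p.1 : k)) +
      ∑ w ∈ Finset.univ.erase (1:ι), Polynomial.C ((p.2 w : k)) * Polynomial.X ^ (enc w)
    with hP
  set CoefSet : Set (ℤ × (ι → ℤ)) :=
    (Set.Icc (-2) 2) ×ˢ (Set.univ.pi fun _ => Set.Icc (-2:ℤ) 2) with hCS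
  have hCSfin : CoefSet.Finite :=
    (Set.finite_Icc _ _).prod (Set.Finite.pi fun _ => Set.finite_Icc _ _)
  have hBadfin : (⋃ p ∈ CoefSet, {x : k | P p ≠ 0 ∧ (P p).IsRoot x}).Finite := by
    refine Set.Finite.biUnion hCSfin fun p _ => ?_
    by_cases hp : P p = 0
    · have : {x : k | P p ≠ 0 ∧ (P p).IsRoot x} = ∅ := by
        ext x; simp [hp]
      rw [this]; exact Set.finite_empty
    · exact (Polynomial.finite_setOf_isRoot hp).subset fun x hx => hx.2
  obtain ⟨r, hr⟩ := (hBadfin.infinite_compl).nonempty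
  rw [Set.mem_compl_iff] at hr
  refine ⟨fun w => if w = 1 then 0 else r ^ (enc w), by simp, ?_⟩
  intro c₀ c hb0 hbc heq
  have hev : (P (c₀, c)).eval r = 0 := by
    have hPdef : P (c₀, c) = Polynomial.C ((c₀ : k)) +
        ∑ w ∈ Finset.univ.erase (1:ι), Polynomial.C ((c w : k)) * Polynomial.X ^ (enc w) := by
      rw [hP]
    rw [hPdef]
    simp only [Polynomial.eval_add, Polynomial.eval_C, Polynomial.eval_finset_sum,
      Polynomial.eval_mul, Polynomial.eval_pow, Polynomial.eval_X]
    rw [← heq]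
    congr 1
    rw [← Finset.add_sum_erase Finset.univ _ (Finset.mem_univ (1:ι))]
    dsimp only
    rw [if_pos (rfl : (1:ι) = 1), mul_zero, zero_add]
    refine Finset.sum_congr rfl fun w hw => ?_
    rw [if_neg (Finset.mem_erase.1 hw).1]
  by_contra hcon
  push_neg at hcon
  have hPne : P (c₀, c) ≠ 0 := by
    rcases ne_or_eq ((c₀ : k)) 0 with h0 | h0
    · intro hz
      have hPdef : P (c₀, c) = Polynomial.C ((c₀ : k)) +
          ∑ w ∈ Finset.univ.erase (1:ι), Polynomial.C ((c w : k)) * Polynomial.X ^ (enc w) := by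
        rw [hP]
      rw [hPdef] at hz
      have hco := congrArg (fun q => Polynomial.coeff q 0) hz
      simp only [Polynomial.coeff_add, Polynomial.coeff_zero,
        Polynomial.finset_sum_coeff, Polynomial.coeff_C_mul, Polynomial.coeff_X_pow,
        Polynomial.coeff_C_zero] at hco
      have hsz : ∀ w ∈ Finset.univ.erase (1:ι),
          (c w : k) * (if (0:ℕ) = enc w then 1 else 0) = 0 := by
        intro w _
        rw [if_neg (by have := enc1 w; omega), mul_zero]
      rw [Finset.sum_congr rfl hsz, Finset.sum_const_zero, add_zero] at hco
      exact h0 hco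
    · obtain ⟨w0, hw0, hcw⟩ := hcon h0
      intro hz
      have hPdef : P (c₀, c) = Polynomial.C ((c₀ : k)) +
          ∑ w ∈ Finset.univ.erase (1:ι), Polynomial.C ((c w : k)) * Polynomial.X ^ (enc w) := by
        rw [hP]
      rw [hPdef] at hz
      have hco := congrArg (fun q => Polynomial.coeff q (enc w0)) hz
      simp only [Polynomial.coeff_add, Polynomial.coeff_zero,
        Polynomial.finset_sum_coeff, Polynomial.coeff_C_mul, Polynomial.coeff_X_pow,
        Polynomial.coeff_C] at hco
      rw [if_neg (by have := enc1 w0; omega)] at hco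
      rw [Finset.sum_eq_single w0] at hco
      · rw [if_pos rfl, mul_one, zero_add] at hco
        exact hcw hco
      · intro b _ hb
        rw [if_neg (fun hh => hb (encinj hh).symm), mul_zero]
      · intro hnm
        exact absurd (Finset.mem_erase.2 ⟨hw0, Finset.mem_univ _⟩) hnm
  have hrmem : r ∈ ⋃ p ∈ CoefSet, {x : k | P p ≠ 0 ∧ (P p).IsRoot x} := by
    refine Set.mem_biUnion ?_ ⟨hPne, hev⟩
    rw [hCS]
    constructor
    · exact Set.mem_Icc.2 (abs_le.1 hb0)
    · intro w _
      exact Set.mem_Icc.2 (abs_le.1 (hbc w))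
  exact hr hrmem
end Exists

theorem INDmu_map {k F ι : Type*} [Field k] [Field F] [Fintype ι] [One ι] (μ : ι → k)
    (f : k →+* F) (h : INDmu μ) : INDmu (fun w => f (μ w)) := by
  intro c₀ c hb0 hbc heq
  have hk : (c₀ : k) + ∑ w, (c w : k) * μ w = 0 := by
    apply f.injective
    rw [map_add, map_intCast, map_sum, map_zero]
    rw [← heq]
    congr 1
    refine Finset.sum_congr rfl fun w _ => ?_
    rw [map_mul, map_intCast]
  obtain ⟨h1, h2⟩ := h c₀ c hb0 hbc hk
  constructor
  · have := congrArg f h1; rwa [map_intCast, map_zero] at this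
  · intro w hw
    have := congrArg f (h2 w hw); rwa [map_intCast, map_zero] at this


section LeftMul
variable {F : Type*} [Field F] {ι : Type*} [Fintype ι] [DecidableEq ι] [Group ι]
variable (μ : ι → F)

def leftMulHom : ι →* lamPerms (glam μ) where
  toFun := fun a => ⟨Equiv.mulLeft a, by
    intro s t
    show glam μ (a * s) (a * t) = glam μ s t
    unfold glam
    congr 1
    rw [mul_inv_rev]
    group⟩
  map_one' := by
    apply Subtype.ext; apply Equiv.ext; intro x; simp
  map_mul' := fun a b => by
    apply Subtype.ext; apply Equiv.ext; intro x
    simp [mul_assoc]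

theorem leftMulHom_bijective (hone : μ 1 = 0) (hIND : INDmu μ) :
    Function.Bijective (leftMulHom μ) := by
  constructor
  · intro a b hab
    have h : (Equiv.mulLeft a) (1:ι) = (Equiv.mulLeft b) 1 :=
      congrArg (fun p : lamPerms (glam μ) => (p.1 : ι → ι) 1) hab
    simpa using h
  · rintro ⟨π, hπ⟩
    have hkey : ∀ t, π t = π 1 * t := by
      intro t
      have h : glam μ (π 1) (π t) = glam μ 1 t := hπ 1 t
      have h2 : (π 1)⁻¹ * (π t) = 1⁻¹ * t := mu_inj μ hone hIND h
      rw [inv_one, one_mul] at h2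
      have h3 : π 1 * ((π 1)⁻¹ * π t) = π 1 * t := by rw [h2]
      rw [mul_inv_cancel_left] at h3
      exact h3
    refine ⟨π 1, Subtype.ext (Equiv.ext fun t => ?_)⟩
    show π 1 * t = π t
    exact (hkey t).symm
end LeftMul

section Transfer
variable {F A B : Type*} [Field F] [AddCommGroup A] [Module F A] [AddCommGroup B] [Module F B]
variable (E : A ≃ₗ[F] B) (mA : A →ₗ[F] A →ₗ[F] A) (mB : B →ₗ[F] B →ₗ[F] B)
variable (hcomp : ∀ u v : A, E (mA u v) = mB (E u) (E v))

include hcomp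

theorem transfer_simple (h : IsSimpleMul mB) : IsSimpleMul mA := by
  obtain ⟨hne, hid⟩ := h
  constructor
  · intro hz
    apply hne
    apply LinearMap.ext; intro u; apply LinearMap.ext; intro v
    have h1 := hcomp (E.symm u) (E.symm v)
    rw [hz] at h1
    simp only [LinearMap.zero_apply, map_zero, E.apply_symm_apply] at h1
    exact h1.symm
  · intro I hIc
    have hres := hid (I.map (E : A →ₗ[F] B)) ?_
    · rcases hres with hb | ht
      · left
        rw [Submodule.eq_bot_iff] at hb ⊢
        intro x hx
        have hEx : E x = 0 := hb (E x) (Submodule.mem_map.2 ⟨x, hx, rfl⟩)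
        apply E.injective
        rwa [map_zero]
      · right
        rw [Submodule.eq_top_iff'] at ht ⊢
        intro a
        obtain ⟨x, hx, hex⟩ := Submodule.mem_map.1 (ht (E a))
        rwa [← E.injective hex]
    · intro x' hx' y'
      obtain ⟨x, hx, rfl⟩ := Submodule.mem_map.1 hx'
      constructor
      · refine Submodule.mem_map.2 ⟨mA x (E.symm y'), (hIc x hx _).1, ?_⟩
        show E (mA x (E.symm y')) = mB (E x) y'
        rw [hcomp, E.apply_symm_apply]
      · refine Submodule.mem_map.2 ⟨mA (E.symm y') x, (hIc x hx _).2, ?_⟩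
        show E (mA (E.symm y') x) = mB y' (E x)
        rw [hcomp, E.apply_symm_apply]

noncomputable def transferAut : autGroup mA ≃* autGroup mB where
  toFun := fun σ => ⟨(E.symm.trans (σ.1.trans E)), by
    intro u v
    have h1 : E.symm (mB u v) = mA (E.symm u) (E.symm v) := by
      apply E.injective
      rw [E.apply_symm_apply, hcomp, E.apply_symm_apply, E.apply_symm_apply]
    show E (σ.1 (E.symm (mB u v))) = mB (E (σ.1 (E.symm u))) (E (σ.1 (E.symm v)))
    rw [h1, σ.2 (E.symm u) (E.symm v), hcomp]⟩
  invFun := fun τ => ⟨(E.trans (τ.1.trans E.symm)), by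
    intro u v
    show E.symm (τ.1 (E (mA u v))) = mA (E.symm (τ.1 (E u))) (E.symm (τ.1 (E v)))
    apply E.injective
    rw [E.apply_symm_apply, hcomp u v, τ.2 (E u) (E v),
      hcomp (E.symm (τ.1 (E u))) (E.symm (τ.1 (E v))), E.apply_symm_apply,
      E.apply_symm_apply]⟩
  left_inv := fun σ => by
    apply Subtype.ext; apply LinearEquiv.ext; intro x
    simp only [LinearEquiv.trans_apply, E.symm_apply_apply]
  right_inv := fun τ => by
    apply Subtype.ext; apply LinearEquiv.ext; intro x
    simp only [LinearEquiv.trans_apply, E.apply_symm_apply]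
  map_mul' := fun σ τ => by
    apply Subtype.ext; apply LinearEquiv.ext; intro x
    show E ((σ.1 * τ.1) (E.symm x)) = E (σ.1 (E.symm (E (τ.1 (E.symm x)))))
    rw [E.symm_apply_apply]
    rfl
end Transfer


lemma lamMul_ringHom {k Fq : Type*} [Field k] [Field Fq] {ι : Type*} [Fintype ι]
    [DecidableEq ι] (f : k →+* Fq) (lam : ι → ι → k) (a b : Fq) (x y : ι → k) :
    lamMul (fun i j => f (lam i j)) (fun i => a * f (x i)) (fun i => b * f (y i))
      = fun i => (a * b) * f (lamMul lam x y i) := by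
  funext i
  rw [lamMul_apply, lamMul_apply]
  have hx : (∑ j, f (lam i j) * (a * f (x j))) = a * f (∑ j, lam i j * x j) := by
    rw [map_sum, Finset.mul_sum]
    refine Finset.sum_congr rfl fun j _ => ?_
    rw [map_mul]; ring
  have hy : (∑ j, f (lam i j) * (b * f (y j))) = b * f (∑ j, lam i j * y j) := by
    rw [map_sum, Finset.mul_sum]
    refine Finset.sum_congr rfl fun j _ => ?_
    rw [map_mul]; ring
  rw [hx, hy, map_sub, map_add, map_mul, map_mul, map_mul]
  ring


/-- Reindexing along a bijection as a linear equivalence. -/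
def reindexMap {F : Type*} [Field F] {ι κ : Type*} (e : ι ≃ κ) :
    (ι → F) ≃ₗ[F] (κ → F) where
  toFun := fun f c => f (e.symm c)
  invFun := fun g i => g (e i)
  map_add' := fun _ _ => rfl
  map_smul' := fun _ _ => rfl
  left_inv := fun f => by funext i; simp
  right_inv := fun g => by funext c; simp

lemma lamMul_reindex {F ι κ : Type*} [Field F] [Fintype ι] [DecidableEq ι]
    [Fintype κ] [DecidableEq κ] (e : ι ≃ κ) (lam : κ → κ → F) (f g : ι → F) :
    reindexMap e (lamMul (fun i j => lam (e i) (e j)) f g)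
      = lamMul lam (reindexMap e f) (reindexMap e g) := by
  funext c
  have hL : reindexMap e (lamMul (fun i j => lam (e i) (e j)) f g) c
      = lamMul (fun i j => lam (e i) (e j)) f g (e.symm c) := rfl
  rw [hL, lamMul_apply, lamMul_apply]
  have hsum : ∀ h : ι → F,
      (∑ j, lam (e (e.symm c)) (e j) * h j) = ∑ j', lam c j' * h (e.symm j') := by
    intro h
    refine Fintype.sum_equiv e _ _ fun j => ?_
    rw [Equiv.apply_symm_apply, Equiv.symm_apply_apply]
  rw [hsum f, hsum g]
  rfl

section TensorSide
variable (k : Type*) [Field k] (Fq : Type*) [Field Fq] [Algebra k Fq]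

noncomputable def tensorEquiv (n : ℕ) : (Fq ⊗[k] (Fin n → k)) ≃ₗ[Fq] (Fin n → Fq) :=
  ((Pi.basisFun k (Fin n)).baseChange Fq).equiv (Pi.basisFun Fq (Fin n)) (Equiv.refl _)

lemma tensorEquiv_tmul {n : ℕ} (a : Fq) (x : Fin n → k) :
    tensorEquiv k Fq n (a ⊗ₜ[k] x) = fun i => a * algebraMap k Fq (x i) := by
  have h1 : (a ⊗ₜ[k] x : Fq ⊗[k] (Fin n → k))
      = ∑ i, (algebraMap k Fq (x i)) • (a ⊗ₜ[k] (Pi.single i 1 : Fin n → k)) := by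
    conv_lhs => rw [← Finset.univ_sum_single x]
    rw [TensorProduct.tmul_sum]
    refine Finset.sum_congr rfl fun i _ => ?_
    rw [single_eq_smul_single i (x i), TensorProduct.tmul_smul, ← algebraMap_smul Fq (x i)]
  have h2 : ∀ i : Fin n, tensorEquiv k Fq n ((1:Fq) ⊗ₜ[k] (Pi.single i 1 : Fin n → k))
      = (Pi.single i 1 : Fin n → Fq) := by
    intro i
    have hb : ((1:Fq) ⊗ₜ[k] (Pi.single i 1 : Fin n → k))
        = ((Pi.basisFun k (Fin n)).baseChange Fq) i := by
      rw [Module.Basis.baseChange_apply, Pi.basisFun_apply]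
    rw [hb]
    unfold tensorEquiv
    rw [Module.Basis.equiv_apply]
    simp [Pi.basisFun_apply]
  have h2a : ∀ i : Fin n, tensorEquiv k Fq n (a ⊗ₜ[k] (Pi.single i 1 : Fin n → k))
      = a • (Pi.single i 1 : Fin n → Fq) := by
    intro i
    have ha : (a ⊗ₜ[k] (Pi.single i 1 : Fin n → k))
        = a • ((1:Fq) ⊗ₜ[k] (Pi.single i 1 : Fin n → k)) := by
      rw [TensorProduct.smul_tmul', smul_eq_mul, mul_one]
    rw [ha, map_smul, h2 i]
  rw [h1, map_sum]
  funext j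
  rw [Finset.sum_apply]
  have hterm : ∀ i : Fin n,
      (tensorEquiv k Fq n ((algebraMap k Fq (x i)) • (a ⊗ₜ[k] (Pi.single i 1 : Fin n → k)))) j
        = algebraMap k Fq (x i) * a * (Pi.single i 1 : Fin n → Fq) j := by
    intro i
    rw [map_smul, h2a i]
    simp only [Pi.smul_apply, smul_eq_mul, mul_assoc]
  rw [Finset.sum_congr rfl fun i _ => hterm i]
  rw [Finset.sum_eq_single j]
  · rw [Pi.single_eq_same, mul_one, mul_comm]
  · intro b _ hb
    rw [Pi.single_eq_of_ne (Ne.symm hb), mul_zero]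
  · intro h
    exact absurd (Finset.mem_univ _) h
end TensorSide

/-- **Corollary 2 of Theorem 1** (Gordeev–Popov): let `G` be a finite (abstract) group
and `k` an infinite field (more generally, a field containing sufficiently many
elements).  Then there is a finite-dimensional (nonassociative) algebra `A` over `k`
(realized here as `k^m` with a bilinear multiplication) such that `A_F = A ⊗_k F` is
simple for every field extension `F/k` (in particular `A` itself is simple) and the full
automorphism group `Aut(A_F)` is isomorphic to `G` for every field extension `F/k`. -/
theorem stmt17 {k : Type*} [Field k] [Infinite k]
    (G : Type*) [Group G] [Finite G] :
    ∃ (m : ℕ) (mul : (Fin m → k) →ₗ[k] (Fin m → k) →ₗ[k] (Fin m → k)),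
      IsSimpleMul mul ∧
      ∀ (F : Type*) [Field F] [Algebra k F]
        (mF : F ⊗[k] (Fin m → k) →ₗ[F] F ⊗[k] (Fin m → k) →ₗ[F] F ⊗[k] (Fin m → k)),
        (∀ (a b : F) (x y : Fin m → k),
            mF (a ⊗ₜ[k] x) (b ⊗ₜ[k] y) = (a * b) ⊗ₜ[k] mul x y) →
        IsSimpleMul mF ∧ Nonempty (autGroup mF ≃* G) := by
  classical
  letI : Fintype G := Fintype.ofFinite G
  set n := Nat.card G with hn
  have hpos : 0 < n := Nat.card_pos
  have hneF : Nonempty (Fin n) := ⟨⟨0, hpos⟩⟩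
  have hneG : Nonempty G := ⟨1⟩
  let ee : Fin n ≃ G := (Finite.equivFin G).symm
  obtain ⟨μ, hone, hIND⟩ := exists_mu k G
  let lamFin : Fin n → Fin n → k := fun i j => glam μ (ee i) (ee j)
  refine ⟨n, lamMul lamFin, ?_, ?_⟩
  · have hG : IsSimpleMul (lamMul (glam μ)) :=
      lamMul_isSimple _ (glam_h0 μ hone hIND) (glam_h1 μ hone hIND)
        (glam_h2 μ hone hIND) (glam_h3 μ hone hIND)
    exact transfer_simple (reindexMap ee) (lamMul lamFin) (lamMul (glam μ))
      (fun u v => lamMul_reindex ee (glam μ) u v) hG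
  · intro Fq _ _ mF hmF
    set μF : G → Fq := fun w => algebraMap k Fq (μ w) with hμF
    have honeF : μF 1 = 0 := by rw [hμF]; simp [hone]
    have hINDF : INDmu μF := INDmu_map μ (algebraMap k Fq) hIND
    let lamFinF : Fin n → Fin n → Fq := fun i j => algebraMap k Fq (lamFin i j)
    set E := tensorEquiv k Fq n with hE
    have hcomp1 : ∀ u v, E (mF u v) = lamMul lamFinF (E u) (E v) := by
      intro u v
      induction u using TensorProduct.induction_on with
      | zero =>
        simp only [map_zero, LinearMap.map_zero, LinearMap.zero_apply]
      | tmul a x =>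
        induction v using TensorProduct.induction_on with
        | zero =>
          simp only [map_zero, LinearMap.map_zero]
        | tmul b y =>
          rw [hmF, hE, tensorEquiv_tmul, tensorEquiv_tmul, tensorEquiv_tmul]
          exact (lamMul_ringHom (algebraMap k Fq) lamFin a b x y).symm
        | add v₁ v₂ ih₁ ih₂ =>
          simp only [map_add, ih₁, ih₂]
      | add u₁ u₂ ih₁ ih₂ =>
        simp only [map_add, LinearMap.add_apply, ih₁, ih₂]
    have hcomp2 : ∀ u v, reindexMap ee (lamMul lamFinF u v)
        = lamMul (glam μF) (reindexMap ee u) (reindexMap ee v) :=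
      fun u v => lamMul_reindex ee (glam μF) u v
    have hGsimpleF : IsSimpleMul (lamMul (glam μF)) :=
      lamMul_isSimple _ (glam_h0 μF honeF hINDF) (glam_h1 μF honeF hINDF)
        (glam_h2 μF honeF hINDF) (glam_h3 μF honeF hINDF)
    have hFinSimpleF : IsSimpleMul (lamMul lamFinF) :=
      transfer_simple (reindexMap ee) (lamMul lamFinF) (lamMul (glam μF)) hcomp2 hGsimpleF
    constructor
    · exact transfer_simple E mF (lamMul lamFinF) hcomp1 hFinSimpleF
    · have e1 : autGroup mF ≃* autGroup (lamMul lamFinF) :=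
        transferAut E mF (lamMul lamFinF) hcomp1
      have e1b : autGroup (lamMul lamFinF) ≃* autGroup (lamMul (glam μF)) :=
        transferAut (reindexMap ee) (lamMul lamFinF) (lamMul (glam μF)) hcomp2
      obtain ⟨e2⟩ : Nonempty ((autGroup (lamMul (glam μF))) ≃* lamPerms (glam μF)) :=
        autGroup_equiv_lamPerms _ (glam_h0 μF honeF hINDF) (glam_hA μF honeF hINDF)
          (glam_hC μF honeF hINDF)
      let e3 : G ≃* lamPerms (glam μF) :=
        MulEquiv.ofBijective (leftMulHom μF) (leftMulHom_bijective μF honeF hINDF)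
      exact ⟨((e1.trans e1b).trans e2).trans e3.symm⟩
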